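/- Let (ω_0,...,ω_{n+1}) be a key sequence and let (ω_0, ω_{i_1},...,ω_{i_l}, ω_{n+1}) be its essential subsequence, where {i_1 < ... < i_l} = {k : 1 ≤ k ≤ n, p_k ≥ 2}. Then the essential subsequence is itself a key sequence, and it is essential (all its intermediate p-values are at least 2). -/
import Mathlib


/-- The essential subsequence (ω₀, ω_{i₁},...,ω_{i_l}, ω_{n+1}) of a key
sequence, where {i₁ < ... < i_l} = {k : 1 ≤ k ≤ n, p_k ≥ 2}, is itself a key
sequence, and it is essential. -/
theorem statement8 (n l : ℕ) (ω : ℕ → ℕ)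
    (hpos : ∀ k ≤ n + 1, 0 < ω k)
    (d p : ℕ → ℕ)
    (hd : ∀ k, d k = (Finset.range (k + 1)).gcd ω)
    (hp : ∀ k, 1 ≤ k → p k = d (k - 1) / d k)
    (hgcd : d (n + 1) = 1)
    (hkey : ∀ k, 1 ≤ k → k ≤ n → ω (k + 1) < p k * ω k)
    -- e enumerates the indices of the essential subsequence
    (e : ℕ → ℕ) (he0 : e 0 = 0) (helast : e (l + 1) = n + 1)
    (hmono : StrictMonoOn e (Set.Iic (l + 1)))
    (hess : ∀ j, 1 ≤ j → j ≤ l → 1 ≤ e j ∧ e j ≤ n ∧ 2 ≤ p (e j))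
    (hall : ∀ k, 1 ≤ k → k ≤ n → 2 ≤ p k → ∃ j, 1 ≤ j ∧ j ≤ l ∧ e j = k)
    (d' p' : ℕ → ℕ)
    (hd' : ∀ k, d' k = (Finset.range (k + 1)).gcd (fun j => ω (e j)))
    (hp' : ∀ k, 1 ≤ k → p' k = d' (k - 1) / d' k) :
    d' (l + 1) = 1 ∧
    (∀ j, 1 ≤ j → j ≤ l → ω (e (j + 1)) < p' j * ω (e j)) ∧
    (∀ j, 1 ≤ j → j ≤ l → 2 ≤ p' j) := by
  have hω0 : 0 < ω 0 := hpos 0 (by omega)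
  -- d is always positive
  have hdpos : ∀ k, 0 < d k := by
    intro k
    rw [hd]
    have h0 : (0 : ℕ) ∈ Finset.range (k + 1) := by simp
    have hdvd : (Finset.range (k + 1)).gcd ω ∣ ω 0 := Finset.gcd_dvd h0
    rcases Nat.eq_zero_or_pos ((Finset.range (k + 1)).gcd ω) with h | h
    · rw [h] at hdvd
      exact absurd (Nat.eq_zero_of_zero_dvd hdvd) (by omega)
    · exact h
  -- recursion for d
  have hdsucc : ∀ k, d (k + 1) = Nat.gcd (ω (k + 1)) (d k) := by
    intro k
    rw [hd, hd, Finset.range_add_one, Finset.gcd_insert]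
    rfl
  have hddvd : ∀ k, d (k + 1) ∣ d k := by
    intro k; rw [hdsucc]; exact Nat.gcd_dvd_right _ _
  have hpd : ∀ k, 1 ≤ k → d (k - 1) = p k * d k := by
    intro k hk
    obtain ⟨m, rfl⟩ : ∃ m, k = m + 1 := ⟨k - 1, by omega⟩
    rw [hp _ hk]
    simp only [Nat.add_sub_cancel]
    exact (Nat.div_mul_cancel (hddvd m)).symm
  have hp1 : ∀ k, 1 ≤ k → 1 ≤ p k := by
    intro k hk
    have h1 := hpd k hk
    have h2 := hdpos (k - 1)
    have h3 := hdpos k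
    by_contra hc
    have : p k = 0 := by omega
    rw [this] at h1; omega
  have hconst : ∀ k, 1 ≤ k → p k = 1 → d k = d (k - 1) := by
    intro k hk h1
    rw [hpd k hk, h1, one_mul]
  -- bound on e
  have hele : ∀ j, j ≤ l + 1 → e j ≤ n + 1 := by
    intro j hj
    have := hmono.monotoneOn (Set.mem_Iic.mpr hj) (Set.mem_Iic.mpr le_rfl) hj
    omega
  -- indices strictly between consecutive e-values are inessential
  have hnotess : ∀ j, j ≤ l → ∀ k, e j < k → k < e (j + 1) → p k = 1 := by
    intro j hj k h1 h2
    have hk1 : 1 ≤ k := by omega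
    have hkn : k ≤ n := by
      have := hele (j + 1) (by omega); omega
    have hple : p k ≤ 1 := by
      by_contra hc
      push_neg at hc
      obtain ⟨j', hj'1, hj'2, hj'e⟩ := hall k hk1 hkn (by omega)
      have hm1 : j < j' := by
        by_contra hcc
        push_neg at hcc
        have := hmono.monotoneOn (Set.mem_Iic.mpr (by omega : j' ≤ l + 1))
          (Set.mem_Iic.mpr (by omega : j ≤ l + 1)) hcc
        omega
      have hm2 : j' < j + 1 := by
        by_contra hcc
        push_neg at hcc
        have := hmono.monotoneOn (Set.mem_Iic.mpr (by omega : j + 1 ≤ l + 1))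
          (Set.mem_Iic.mpr (by omega : j' ≤ l + 1)) hcc
        omega
      omega
    have := hp1 k hk1
    omega
  -- d is constant between consecutive e-values
  have hdint : ∀ j, j ≤ l → ∀ t, e j + t < e (j + 1) → d (e j + t) = d (e j) := by
    intro j hj t
    induction t with
    | zero => simp
    | succ t ih =>
      intro h
      have hprev := ih (by omega)
      have hpk := hnotess j hj (e j + t + 1) (by omega) (by omega)
      have hc := hconst (e j + t + 1) (by omega) hpk
      simp only [Nat.add_sub_cancel] at hc
      rw [show e j + (t + 1) = e j + t + 1 from by omega, hc]
      exact hprev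
  have hejlt : ∀ j, j ≤ l → e j < e (j + 1) := by
    intro j hj
    exact hmono (Set.mem_Iic.mpr (by omega)) (Set.mem_Iic.mpr (by omega)) (by omega)
  have hdm : ∀ j, j ≤ l → d (e (j + 1) - 1) = d (e j) := by
    intro j hj
    have hlt := hejlt j hj
    have := hdint j hj (e (j + 1) - 1 - e j) (by omega)
    rwa [show e j + (e (j + 1) - 1 - e j) = e (j + 1) - 1 from by omega] at this
  -- d' j = d (e j)
  have hd'e : ∀ j, j ≤ l + 1 → d' j = d (e j) := by
    intro j
    induction j with
    | zero =>
      intro _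
      rw [hd', hd]
      simp [he0]
    | succ j ih =>
      intro hj
      have hj' : j ≤ l := by omega
      have hlt := hejlt j hj'
      have hrec : d' (j + 1) = Nat.gcd (ω (e (j + 1))) (d' j) := by
        rw [hd', hd', Finset.range_add_one, Finset.gcd_insert]
        rfl
      rw [hrec, ih (by omega), ← hdm j hj',
        show e (j + 1) = (e (j + 1) - 1) + 1 from by omega, hdsucc,
        Nat.add_sub_cancel]
  -- p' j = p (e j)
  have hp'e : ∀ j, 1 ≤ j → j ≤ l → p' j = p (e j) := by
    intro j hj1 hjl
    obtain ⟨he1, hen, _⟩ := hess j hj1 hjl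
    rw [hp' j hj1, hp (e j) he1, hd'e (j - 1) (by omega), hd'e j (by omega)]
    have h1 : d (e ((j - 1) + 1) - 1) = d (e (j - 1)) := hdm (j - 1) (by omega)
    rw [show (j - 1) + 1 = j from by omega] at h1
    rw [h1]
  -- the decreasing chain for the key inequality
  have hchain : ∀ j, 1 ≤ j → j ≤ l → ∀ t, e j + 1 + t ≤ e (j + 1) →
      ω (e j + 1 + t) < p (e j) * ω (e j) := by
    intro j hj1 hjl t
    obtain ⟨he1, hen, _⟩ := hess j hj1 hjl
    induction t with
    | zero =>
      intro _
      exact hkey (e j) he1 hen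
    | succ t ih =>
      intro h
      have hprev := ih (by omega)
      set m := e j + 1 + t with hm
      have hmn : m ≤ n := by
        have := hele (j + 1) (by omega); omega
      have hkm := hkey m (by omega) hmn
      have hpm : p m = 1 := hnotess j hjl m (by omega) (by omega)
      rw [hpm, one_mul] at hkm
      calc ω (e j + 1 + (t + 1)) = ω (m + 1) := by rw [hm]; ring_nf
        _ < ω m := hkm
        _ < p (e j) * ω (e j) := hprev
  refine ⟨?_, ?_, ?_⟩
  · rw [hd'e (l + 1) le_rfl, helast, hgcd]
  · intro j hj1 hjl
    have hlt := hejlt j hjl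
    have := hchain j hj1 hjl (e (j + 1) - (e j + 1)) (by omega)
    rw [show e j + 1 + (e (j + 1) - (e j + 1)) = e (j + 1) from by omega] at this
    rw [hp'e j hj1 hjl]
    exact this
  · intro j hj1 hjl
    rw [hp'e j hj1 hjl]
    exact (hess j hj1 hjl).2.2
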